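/- Under hyper-generalized recurrence with recurrence 1-forms A and B, if r = 0, then (A + (n−2)B)(Ric₀ X) = 0 for all X ∈ V, i.e. the 1-form (A + (n−2)B) annihilates the image of the Ricci operator. (Content of Theorem 2.5(a).) -/

import Mathlib

open scoped BigOperators

/-- Kulkarni–Nomizu product of two bilinear forms (as real-valued functions). -/
def KN {V : Type*} (h k : V → V → ℝ) (X Y Z W : V) : ℝ :=
  h X Z * k Y W + h Y W * k X Z - h X W * k Y Z - h Y Z * k X W

/-- The tensor `G(X,Y,Z,W) = g(X,Z)g(Y,W) - g(Y,Z)g(X,W)`. -/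
def Gten {V : Type*} (g : V → V → ℝ) (X Y Z W : V) : ℝ :=
  g X Z * g Y W - g Y Z * g X W

/-- Derivation action of the curvature endomorphism `Rend U V` on a quadrilinear form `T`. -/
def derAct {V : Type*} (Rend : V → V → V → V) (T : V → V → V → V → ℝ)
    (U V' X Y Z W : V) : ℝ :=
  - T (Rend U V' X) Y Z W - T X (Rend U V' Y) Z W
    - T X Y (Rend U V' Z) W - T X Y Z (Rend U V' W)

theorem hgr_zero_scalar_annihilates_ricci_image {V : Type*} [AddCommGroup V] [Module ℝ V]
    (n : ℕ) (hn : 3 ≤ n)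
    (b : Module.Basis (Fin n) ℝ V) (e' : Fin n → V)
    (g : V →ₗ[ℝ] V →ₗ[ℝ] ℝ)
    (hg_symm : ∀ X Y, g X Y = g Y X)
    (hg_nd : ∀ X, (∀ Y, g X Y = 0) → X = 0)
    (hdual : ∀ i j, g (b i) (e' j) = if i = j then (1 : ℝ) else 0)
    (R : V →ₗ[ℝ] V →ₗ[ℝ] V →ₗ[ℝ] V →ₗ[ℝ] ℝ)
    (hR_ne : R ≠ 0)
    (hR_anti : ∀ X Y Z W, R X Y Z W = - R Y X Z W)
    (hR_pair : ∀ X Y Z W, R X Y Z W = R Z W X Y)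
    (Ric : V → V → ℝ)
    (hRic : ∀ X Z, Ric X Z = ∑ i, R X (b i) Z (e' i))
    (r : ℝ) (hr : r = ∑ i, Ric (b i) (e' i))
    (Ric₀ : V →ₗ[ℝ] V)
    (hRic₀ : ∀ X Y, g (Ric₀ X) Y = Ric X Y)
    (D : V →ₗ[ℝ] V →ₗ[ℝ] V →ₗ[ℝ] V →ₗ[ℝ] V →ₗ[ℝ] ℝ)
    (hBianchi : ∀ X Y Z W U, D X Y Z W U + D Y Z X W U + D Z X Y W U = 0)
    (A B : V →ₗ[ℝ] ℝ) (hA : A ≠ 0) (hB : B ≠ 0)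
    (hHGR : ∀ U X Y Z W,
      D U X Y Z W = A U * R X Y Z W + B U * KN (fun a c => g a c) Ric X Y Z W)
    (hr0 : r = 0)
    :
    ∀ X, A (Ric₀ X) + ((n : ℝ) - 2) * B (Ric₀ X) = 0 := by
  intro X
  -- R is antisymmetric in its last two arguments
  have hR_anti₂ : ∀ P Q Z W, R P Q Z W = - R P Q W Z := by
    intro P Q Z W
    rw [hR_pair, hR_anti, hR_pair]
  have hdual' : ∀ i j, g (e' i) (b j) = if j = i then (1:ℝ) else 0 := by
    intro i j; rw [hg_symm]; exact hdual j i
  -- delta contractions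
  have deltaA : ∀ (j : Fin n) (f : Fin n → ℝ), (∑ i, g (b i) (e' j) * f i) = f j := by
    intro j f
    simp [hdual, ite_mul, Finset.sum_ite_eq']
  have deltaB : ∀ (j : Fin n) (f : Fin n → ℝ), (∑ i, g (b j) (e' i) * f i) = f j := by
    intro j f
    simp [hdual, ite_mul, Finset.sum_ite_eq]
  have traceg : (∑ i, g (b i) (e' i)) = (n : ℝ) := by
    simp [hdual]
  -- representations of a vector in the two dual bases
  have hrepr : ∀ Z : V, (∑ i, g Z (e' i) • b i) = Z := by
    intro Z
    have h1 : ∀ j, g Z (e' j) = b.repr Z j := by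
      intro j
      conv_lhs => rw [← b.sum_repr Z]
      rw [map_sum, LinearMap.sum_apply]
      simp [map_sum, map_smul, LinearMap.sum_apply, LinearMap.smul_apply, smul_eq_mul,
        hdual, mul_ite, Finset.sum_ite_eq']
    calc (∑ i, g Z (e' i) • b i) = ∑ i, b.repr Z i • b i := by
          exact Finset.sum_congr rfl fun i _ => by rw [h1]
      _ = Z := b.sum_repr Z
  have hrepr' : ∀ Z : V, (∑ i, g Z (b i) • e' i) = Z := by
    intro Z
    have hz : ∀ j, g (Z - ∑ i, g Z (b i) • e' i) (b j) = 0 := by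
      intro j
      have h2 : g (∑ i, g Z (b i) • e' i) (b j) = g Z (b j) := by
        simp [map_sum, map_smul, LinearMap.sum_apply, LinearMap.smul_apply, smul_eq_mul,
          hdual', mul_ite, Finset.sum_ite_eq']
      rw [map_sub, LinearMap.sub_apply, h2, sub_self]
    have hW : ∀ W, g (Z - ∑ i, g Z (b i) • e' i) W = 0 := by
      intro W
      conv_lhs => rw [← hrepr W]
      rw [map_sum]
      refine Finset.sum_eq_zero fun j _ => ?_
      rw [map_smul, smul_eq_mul, hz j, mul_zero]
    have h0 := hg_nd _ hW
    have h1 := sub_eq_zero.mp h0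
    exact h1.symm
  -- multilinearity of R over finite sums
  have Rsum₁ : ∀ (P Q W' : V) (c : Fin n → ℝ) (v : Fin n → V),
      R (∑ k, c k • v k) P Q W' = ∑ k, c k * R (v k) P Q W' := by
    intro P Q W' c v
    simp [map_sum, map_smul, LinearMap.sum_apply, LinearMap.smul_apply, smul_eq_mul]
  have Rsum₃ : ∀ (P Q W' : V) (c : Fin n → ℝ) (v : Fin n → V),
      R P Q (∑ k, c k • v k) W' = ∑ k, c k * R P Q (v k) W' := by
    intro P Q W' c v
    simp [map_sum, map_smul, LinearMap.sum_apply, LinearMap.smul_apply, smul_eq_mul]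
  have Rsum₄ : ∀ (P Q W' : V) (c : Fin n → ℝ) (v : Fin n → V),
      R P Q W' (∑ k, c k • v k) = ∑ k, c k * R P Q W' (v k) := by
    intro P Q W' c v
    simp [map_sum, map_smul, smul_eq_mul]
  -- bilinearity of Ric over finite sums
  have Ric₂sum : ∀ (Z : V) (c : Fin n → ℝ) (v : Fin n → V),
      Ric Z (∑ k, c k • v k) = ∑ k, c k * Ric Z (v k) := by
    intro Z c v
    rw [hRic]
    rw [Finset.sum_congr rfl fun i _ => Rsum₃ Z (b i) (e' i) c v]
    rw [Finset.sum_comm]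
    refine Finset.sum_congr rfl fun k _ => ?_
    rw [← Finset.mul_sum, ← hRic]
  have Ric₁sum : ∀ (W' : V) (c : Fin n → ℝ) (v : Fin n → V),
      Ric (∑ k, c k • v k) W' = ∑ k, c k * Ric (v k) W' := by
    intro W' c v
    rw [hRic]
    rw [Finset.sum_congr rfl fun i _ => Rsum₁ (b i) W' (e' i) c v]
    rw [Finset.sum_comm]
    refine Finset.sum_congr rfl fun k _ => ?_
    rw [← Finset.mul_sum, ← hRic]
  -- contractions of Ric
  have RicC₁ : ∀ Z W', (∑ i, g Z (e' i) * Ric (b i) W') = Ric Z W' := by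
    intro Z W'
    rw [← Ric₁sum W' (fun i => g Z (e' i)) b, hrepr]
  have hrz : (∑ i, Ric (b i) (e' i)) = 0 := by rw [← hr, hr0]
  -- metric duals of the 1-forms
  have hAg : ∀ Z, g Z (∑ i, A (b i) • e' i) = A Z := by
    intro Z
    have l : g Z (∑ i, A (b i) • e' i) = ∑ i, A (b i) * g Z (e' i) := by
      simp [map_sum, map_smul, smul_eq_mul]
    have rr : A Z = ∑ i, g Z (e' i) * A (b i) := by
      conv_lhs => rw [← hrepr Z]
      simp [map_sum, map_smul, smul_eq_mul]
    rw [l, rr]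
    exact Finset.sum_congr rfl fun i _ => mul_comm _ _
  have hBg : ∀ Z, g Z (∑ i, B (b i) • e' i) = B Z := by
    intro Z
    have l : g Z (∑ i, B (b i) • e' i) = ∑ i, B (b i) * g Z (e' i) := by
      simp [map_sum, map_smul, smul_eq_mul]
    have rr : B Z = ∑ i, g Z (e' i) * B (b i) := by
      conv_lhs => rw [← hrepr Z]
      simp [map_sum, map_smul, smul_eq_mul]
    rw [l, rr]
    exact Finset.sum_congr rfl fun i _ => mul_comm _ _
  -- the twice-contracted Bianchi identity
  have key : ∀ Y, Ric Y (∑ i, A (b i) • e' i)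
      + ((n:ℝ) - 2) * Ric Y (∑ i, B (b i) • e' i) = 0 := by
    intro Y
    have hsum : (∑ j, ∑ i,
        ((A (b j) * R Y (b i) (e' j) (e' i) + B (b j) * KN (fun a c => g a c) Ric Y (b i) (e' j) (e' i))
        + (A Y * R (b i) (b j) (e' j) (e' i) + B Y * KN (fun a c => g a c) Ric (b i) (b j) (e' j) (e' i))
        + (A (b i) * R (b j) Y (e' j) (e' i) + B (b i) * KN (fun a c => g a c) Ric (b j) Y (e' j) (e' i)))) = 0 := by
      refine Finset.sum_eq_zero fun j _ => Finset.sum_eq_zero fun i _ => ?_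
      have h := hBianchi (b j) Y (b i) (e' j) (e' i)
      rw [hHGR, hHGR, hHGR] at h
      linarith
    have split : (∑ j, ∑ i,
        ((A (b j) * R Y (b i) (e' j) (e' i) + B (b j) * KN (fun a c => g a c) Ric Y (b i) (e' j) (e' i))
        + (A Y * R (b i) (b j) (e' j) (e' i) + B Y * KN (fun a c => g a c) Ric (b i) (b j) (e' j) (e' i))
        + (A (b i) * R (b j) Y (e' j) (e' i) + B (b i) * KN (fun a c => g a c) Ric (b j) Y (e' j) (e' i))))
        = (∑ j, ∑ i, A (b j) * R Y (b i) (e' j) (e' i))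
        + (∑ j, ∑ i, B (b j) * KN (fun a c => g a c) Ric Y (b i) (e' j) (e' i))
        + (∑ j, ∑ i, A Y * R (b i) (b j) (e' j) (e' i))
        + (∑ j, ∑ i, B Y * KN (fun a c => g a c) Ric (b i) (b j) (e' j) (e' i))
        + (∑ j, ∑ i, A (b i) * R (b j) Y (e' j) (e' i))
        + (∑ j, ∑ i, B (b i) * KN (fun a c => g a c) Ric (b j) Y (e' j) (e' i)) := by
      simp only [Finset.sum_add_distrib]
      ring
    -- Piece 1
    have P1 : (∑ j, ∑ i, A (b j) * R Y (b i) (e' j) (e' i)) = Ric Y (∑ i, A (b i) • e' i) := by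
      have inner : ∀ j, (∑ i, A (b j) * R Y (b i) (e' j) (e' i)) = A (b j) * Ric Y (e' j) := by
        intro j; rw [← Finset.mul_sum, ← hRic]
      rw [Finset.sum_congr rfl fun j _ => inner j]
      exact (Ric₂sum Y (fun j => A (b j)) e').symm
    -- Piece 2
    have P2 : (∑ j, ∑ i, B (b j) * KN (fun a c => g a c) Ric Y (b i) (e' j) (e' i))
        = ((n:ℝ) - 2) * Ric Y (∑ i, B (b i) • e' i) := by
      have inner : ∀ j, (∑ i, KN (fun a c => g a c) Ric Y (b i) (e' j) (e' i))
          = ((n:ℝ) - 2) * Ric Y (e' j) := by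
        intro j
        have e0 : (∑ i, KN (fun a c => g a c) Ric Y (b i) (e' j) (e' i))
            = (∑ i, g Y (e' j) * Ric (b i) (e' i)) + (∑ i, g (b i) (e' i) * Ric Y (e' j))
              - (∑ i, g Y (e' i) * Ric (b i) (e' j)) - (∑ i, g (b i) (e' j) * Ric Y (e' i)) := by
          calc (∑ i, KN (fun a c => g a c) Ric Y (b i) (e' j) (e' i))
              = ∑ i, (g Y (e' j) * Ric (b i) (e' i) + g (b i) (e' i) * Ric Y (e' j)
                - g Y (e' i) * Ric (b i) (e' j) - g (b i) (e' j) * Ric Y (e' i)) :=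
                Finset.sum_congr rfl fun i _ => by simp [KN]
            _ = _ := by
                rw [Finset.sum_sub_distrib, Finset.sum_sub_distrib, Finset.sum_add_distrib]
        rw [e0, ← Finset.mul_sum, hrz, ← Finset.sum_mul, traceg, RicC₁,
          deltaA j (fun i => Ric Y (e' i))]
        ring
      have inner2 : ∀ j, (∑ i, B (b j) * KN (fun a c => g a c) Ric Y (b i) (e' j) (e' i))
          = B (b j) * (((n:ℝ) - 2) * Ric Y (e' j)) := by
        intro j; rw [← Finset.mul_sum, inner j]
      rw [Finset.sum_congr rfl fun j _ => inner2 j]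
      rw [show (∑ j, B (b j) * (((n:ℝ) - 2) * Ric Y (e' j)))
          = ((n:ℝ) - 2) * ∑ j, B (b j) * Ric Y (e' j) from by
        rw [Finset.mul_sum]; exact Finset.sum_congr rfl fun j _ => by ring]
      rw [← Ric₂sum Y (fun j => B (b j)) e']
    -- Piece 3
    have P3 : (∑ j, ∑ i, A Y * R (b i) (b j) (e' j) (e' i)) = 0 := by
      rw [Finset.sum_comm]
      have inner : ∀ i, (∑ j, A Y * R (b i) (b j) (e' j) (e' i)) = A Y * (- Ric (b i) (e' i)) := by
        intro i
        rw [← Finset.mul_sum]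
        congr 1
        rw [Finset.sum_congr rfl fun j _ => hR_anti₂ (b i) (b j) (e' j) (e' i)]
        rw [Finset.sum_neg_distrib, ← hRic]
      rw [Finset.sum_congr rfl fun i _ => inner i, ← Finset.mul_sum, Finset.sum_neg_distrib, hrz]
      simp
    -- Piece 4
    have P4 : (∑ j, ∑ i, B Y * KN (fun a c => g a c) Ric (b i) (b j) (e' j) (e' i)) = 0 := by
      have inner : ∀ j, (∑ i, KN (fun a c => g a c) Ric (b i) (b j) (e' j) (e' i))
          = Ric (b j) (e' j) + Ric (b j) (e' j)
            - (n:ℝ) * Ric (b j) (e' j) - g (b j) (e' j) * (∑ i, Ric (b i) (e' i)) := by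
        intro j
        have e0 : (∑ i, KN (fun a c => g a c) Ric (b i) (b j) (e' j) (e' i))
            = (∑ i, g (b i) (e' j) * Ric (b j) (e' i)) + (∑ i, g (b j) (e' i) * Ric (b i) (e' j))
              - (∑ i, g (b i) (e' i) * Ric (b j) (e' j)) - (∑ i, g (b j) (e' j) * Ric (b i) (e' i)) := by
          calc (∑ i, KN (fun a c => g a c) Ric (b i) (b j) (e' j) (e' i))
              = ∑ i, (g (b i) (e' j) * Ric (b j) (e' i) + g (b j) (e' i) * Ric (b i) (e' j)
                - g (b i) (e' i) * Ric (b j) (e' j) - g (b j) (e' j) * Ric (b i) (e' i)) :=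
                Finset.sum_congr rfl fun i _ => by simp [KN]
            _ = _ := by
                rw [Finset.sum_sub_distrib, Finset.sum_sub_distrib, Finset.sum_add_distrib]
        rw [e0, deltaA j (fun i => Ric (b j) (e' i)), deltaB j (fun i => Ric (b i) (e' j)),
          ← Finset.sum_mul, traceg, ← Finset.mul_sum]
      have inner2 : ∀ j, (∑ i, B Y * KN (fun a c => g a c) Ric (b i) (b j) (e' j) (e' i))
          = B Y * (Ric (b j) (e' j) + Ric (b j) (e' j)
            - (n:ℝ) * Ric (b j) (e' j) - g (b j) (e' j) * (∑ i, Ric (b i) (e' i))) := by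
        intro j; rw [← Finset.mul_sum, inner j]
      rw [Finset.sum_congr rfl fun j _ => inner2 j, ← Finset.mul_sum]
      have hz2 : (∑ j, (Ric (b j) (e' j) + Ric (b j) (e' j)
          - (n:ℝ) * Ric (b j) (e' j) - g (b j) (e' j) * (∑ i, Ric (b i) (e' i)))) = 0 := by
        have step : ∀ j : Fin n, (Ric (b j) (e' j) + Ric (b j) (e' j)
            - (n:ℝ) * Ric (b j) (e' j) - g (b j) (e' j) * (∑ i, Ric (b i) (e' i)))
            = (2 - (n:ℝ)) * Ric (b j) (e' j) := by
          intro j; rw [hrz]; ring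
        rw [Finset.sum_congr rfl fun j _ => step j, ← Finset.mul_sum, hrz, mul_zero]
      rw [hz2, mul_zero]
    -- Piece 5
    have P5 : (∑ j, ∑ i, A (b i) * R (b j) Y (e' j) (e' i)) = Ric Y (∑ i, A (b i) • e' i) := by
      have inner : ∀ j, (∑ i, A (b i) * R (b j) Y (e' j) (e' i))
          = R (b j) Y (e' j) (∑ i, A (b i) • e' i) :=
        fun j => (Rsum₄ (b j) Y (e' j) (fun i => A (b i)) e').symm
      rw [Finset.sum_congr rfl fun j _ => inner j]
      have step : ∀ j, R (b j) Y (e' j) (∑ i, A (b i) • e' i)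
          = R Y (b j) (∑ i, A (b i) • e' i) (e' j) := by
        intro j
        rw [hR_anti (b j) Y, hR_anti₂ Y (b j) (e' j) (∑ i, A (b i) • e' i), neg_neg]
      rw [Finset.sum_congr rfl fun j _ => step j, ← hRic]
    -- Piece 6
    have P6 : (∑ j, ∑ i, B (b i) * KN (fun a c => g a c) Ric (b j) Y (e' j) (e' i))
        = ((n:ℝ) - 2) * Ric Y (∑ i, B (b i) • e' i) := by
      have inner : ∀ j, (∑ i, B (b i) * KN (fun a c => g a c) Ric (b j) Y (e' j) (e' i))
          = g (b j) (e' j) * Ric Y (∑ i, B (b i) • e' i)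
            + (∑ i, g Y (e' i) * B (b i)) * Ric (b j) (e' j)
            - B (b j) * Ric Y (e' j)
            - g Y (e' j) * Ric (b j) (∑ i, B (b i) • e' i) := by
        intro j
        have e0 : (∑ i, B (b i) * KN (fun a c => g a c) Ric (b j) Y (e' j) (e' i))
            = (∑ i, g (b j) (e' j) * (B (b i) * Ric Y (e' i)))
              + (∑ i, (g Y (e' i) * B (b i)) * Ric (b j) (e' j))
              - (∑ i, g (b j) (e' i) * (B (b i) * Ric Y (e' j)))
              - (∑ i, g Y (e' j) * (B (b i) * Ric (b j) (e' i))) := by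
          calc (∑ i, B (b i) * KN (fun a c => g a c) Ric (b j) Y (e' j) (e' i))
              = ∑ i, (g (b j) (e' j) * (B (b i) * Ric Y (e' i))
                + (g Y (e' i) * B (b i)) * Ric (b j) (e' j)
                - g (b j) (e' i) * (B (b i) * Ric Y (e' j))
                - g Y (e' j) * (B (b i) * Ric (b j) (e' i))) :=
                Finset.sum_congr rfl fun i _ => by simp only [KN]; ring
            _ = _ := by
                rw [Finset.sum_sub_distrib, Finset.sum_sub_distrib, Finset.sum_add_distrib]
        rw [e0]
        rw [← Finset.mul_sum, ← Ric₂sum Y (fun i => B (b i)) e']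
        rw [← Finset.sum_mul]
        rw [deltaB j (fun i => B (b i) * Ric Y (e' j))]
        rw [show (∑ i, g Y (e' j) * (B (b i) * Ric (b j) (e' i)))
            = g Y (e' j) * ∑ i, B (b i) * Ric (b j) (e' i) from by rw [Finset.mul_sum]]
        rw [← Ric₂sum (b j) (fun i => B (b i)) e']
      rw [Finset.sum_congr rfl fun j _ => inner j]
      rw [Finset.sum_sub_distrib, Finset.sum_sub_distrib, Finset.sum_add_distrib]
      rw [← Finset.sum_mul, traceg]
      rw [← Finset.mul_sum, hrz, mul_zero]
      rw [← Ric₂sum Y (fun j => B (b j)) e']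
      rw [RicC₁ Y (∑ i, B (b i) • e' i)]
      ring
    rw [split, P1, P2, P3, P4, P5, P6] at hsum
    linarith
  have h1 := hAg (Ric₀ X)
  have h2 := hBg (Ric₀ X)
  rw [← h1, ← h2, hRic₀, hRic₀]
  exact key X
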